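/- (Quadratic bound extraction, ℓ2 case.) Under the hypotheses of the quadratic Lagrangian sensitivity result, let UB ≥ Z be an upper bound of the mixed-integer ℓ2 ramp-loss problem (of which Q is a relaxation after the change of variable w_{k₀} = w̄_{k₀} + w̃), and set S = ∑_i ᾱ_i y_i x_{i k₀} and D = (w̃ − S)² − 2(Z − UB). Then D ≥ 0 and every optimal solution of the mixed-integer problem satisfies S − √D ≤ w_{k₀} ≤ S + √D. -/
import Mathlib

/-- Quadratic bound extraction (ℓ2 case). If Z ≤ UB and the value
t = w_{k₀} of an optimal mixed-integer solution satisfies the Lagrangian relaxation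
inequality Z + (t − w̃)((1/2)(t − w̃) + w̃ − S) ≤ UB (with w̄_{k₀} = t − w̃), then
D = (w̃ − S)² − 2(Z − UB) ≥ 0 and S − √D ≤ w_{k₀} ≤ S + √D. -/
theorem quadratic_bound_extraction_l2
    (Z UB wt S t : ℝ) (hZUB : Z ≤ UB)
    (hineq : Z + (t - wt) * ((1 / 2) * (t - wt) + wt - S) ≤ UB) :
    0 ≤ (wt - S) ^ 2 - 2 * (Z - UB) ∧
      S - Real.sqrt ((wt - S) ^ 2 - 2 * (Z - UB)) ≤ t ∧
      t ≤ S + Real.sqrt ((wt - S) ^ 2 - 2 * (Z - UB)) := by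
  set D := (wt - S) ^ 2 - 2 * (Z - UB) with hD
  have hD0 : 0 ≤ D := by nlinarith [sq_nonneg (wt - S)]
  have h2 : (t - S) ^ 2 ≤ D := by nlinarith
  have habs : |t - S| ≤ Real.sqrt D := by
    rw [← Real.sqrt_sq_eq_abs]
    exact Real.sqrt_le_sqrt h2
  rw [abs_le] at habs
  exact ⟨hD0, by linarith [habs.1], by linarith [habs.2]⟩
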